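/- Let p ≥ 2 be an even integer, S : [0,T] → ℝ continuous with osc(S,π_n) → 0, and suppose the discrete local times L_t^{π_n;p}(·) converge uniformly for each t to a jointly continuous limit L^{p,c}, with the partition mesh tending to zero. Then for every a ∈ ℝ and t ∈ [0,T]: ∫_0^t 1_{{S(u) < a}} dL^{p,c}_u(a) = 0, ∫_0^t 1_{{S(u) > a}} dL^{p,c}_u(a) = 0, and consequently ∫_0^t 1_{{S(u) = a}} dL^{p,c}_u(a) = L^{p,c}_t(a), where the integrals are Lebesgue-Stieltjes integrals in the time variable against the nondecreasing function t ↦ L^{p,c}_t(a). -/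

import Mathlib

open Filter MeasureTheory Set

/-- A nested sequence of partitions `0 = t_0^n < t_1^n < ... < t_{N(n)}^n = T` of `[0, T]`. -/
structure PartitionSeq (T : ℝ) where
  N : ℕ → ℕ
  pos : ∀ n, 0 < N n
  pt : ℕ → ℕ → ℝ
  pt_zero : ∀ n, pt n 0 = 0
  pt_last : ∀ n, pt n (N n) = T
  pt_mono : ∀ n, ∀ j, j < N n → pt n j < pt n (j + 1)
  nested : ∀ n, ∀ j, j ≤ N n → ∃ j', j' ≤ N (n + 1) ∧ pt (n + 1) j' = pt n j

/-- Oscillation of `S` along the partition `π_n`. -/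
noncomputable def oscP {T : ℝ} (S : ℝ → ℝ) (P : PartitionSeq T) (n : ℕ) : ℝ :=
  sSup {y | ∃ j < P.N n, ∃ u ∈ Icc (P.pt n j) (P.pt n (j + 1)),
    ∃ v ∈ Icc (P.pt n j) (P.pt n (j + 1)), y = |S u - S v|}

/-- Mesh of the partition `π_n`. -/
noncomputable def meshP {T : ℝ} (P : PartitionSeq T) (n : ℕ) : ℝ :=
  sSup {y | ∃ j < P.N n, y = P.pt n (j + 1) - P.pt n j}

/-- Partial sums `Σ_{t_j ≤ t} |S(t_{j+1}) - S(t_j)|^p` of `p`-th variation along `π_n`. -/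
noncomputable def pvarSum {T : ℝ} (S : ℝ → ℝ) (P : PartitionSeq T) (p : ℝ) (n : ℕ) (t : ℝ) : ℝ :=
  ∑ j ∈ Finset.range (P.N n),
    if P.pt n j ≤ t then |S (P.pt n (j + 1)) - S (P.pt n j)| ^ p else 0

/-- Discrete local time of order `p` of `S` along `π_n`:
`L_t^{π_n;p}(x) = Σ_{t_j ≤ t} 1_{⦇S(t_j),S(t_{j+1})⦈}(x) |S(t_{j+1}) - x|^{p-1}`. -/
noncomputable def discLT {T : ℝ} (S : ℝ → ℝ) (P : PartitionSeq T) (p : ℕ) (n : ℕ)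
    (t x : ℝ) : ℝ :=
  ∑ j ∈ Finset.range (P.N n),
    if P.pt n j ≤ t then
      Set.indicator (Set.uIoc (S (P.pt n j)) (S (P.pt n (j + 1))))
        (fun _ => |S (P.pt n (j + 1)) - x| ^ (p - 1)) x
    else 0

/-- `S` has a continuous local time `L` of order `p` along `P`: the oscillations tend to `0`,
the discrete local times converge uniformly in `x` for each `t ∈ [0,T]`, and the limit is
jointly continuous. -/
def HasCLT {T : ℝ} (P : PartitionSeq T) (p : ℕ) (S : ℝ → ℝ) (L : ℝ → ℝ → ℝ) : Prop :=
  Tendsto (oscP S P) atTop (nhds 0) ∧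
  (∀ t ∈ Icc (0 : ℝ) T, TendstoUniformly (fun n x => discLT S P p n t x) (fun x => L t x) atTop) ∧
  Continuous (fun q : ℝ × ℝ => L q.1 q.2)

/-- `S ∈ V_p(π)` with `p`-th variation function `V`. -/
def HasPVar {T : ℝ} (P : PartitionSeq T) (p : ℝ) (S : ℝ → ℝ) (V : ℝ → ℝ) : Prop :=
  Tendsto (oscP S P) atTop (nhds 0) ∧
  ContinuousOn V (Icc 0 T) ∧ MonotoneOn V (Icc 0 T) ∧
  ∀ t ∈ Icc (0 : ℝ) T, Tendsto (fun n => pvarSum S P p n t) atTop (nhds (V t))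
lemma ptMono {T : ℝ} (P : PartitionSeq T) (n : ℕ) :
    ∀ {j k : ℕ}, j ≤ k → k ≤ P.N n → P.pt n j ≤ P.pt n k := by
  intro j k hjk hk
  induction k with
  | zero => simp [Nat.le_zero.mp hjk]
  | succ k ih =>
    rcases Nat.lt_or_ge j (k + 1) with h | h
    · exact (ih (Nat.lt_succ_iff.mp h) ((Nat.le_succ k).trans hk)).trans
        (P.pt_mono n k hk).le
    · have : j = k + 1 := le_antisymm hjk h
      simp [this]

lemma pt_mem {T : ℝ} (P : PartitionSeq T) (n j : ℕ) (hj : j ≤ P.N n) :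
    P.pt n j ∈ Icc (0 : ℝ) T := by
  constructor
  · have := ptMono P n (Nat.zero_le j) hj
    rwa [P.pt_zero] at this
  · have := ptMono P n hj le_rfl
    rwa [P.pt_last] at this

lemma oscP_bddAbove {T : ℝ} (S : ℝ → ℝ) (P : PartitionSeq T) (n : ℕ)
    (hS : ContinuousOn S (Icc 0 T)) :
    BddAbove {y | ∃ j < P.N n, ∃ u ∈ Icc (P.pt n j) (P.pt n (j + 1)),
      ∃ v ∈ Icc (P.pt n j) (P.pt n (j + 1)), y = |S u - S v|} := by
  obtain ⟨M, hM⟩ := (isCompact_Icc (a := (0:ℝ)) (b := T)).exists_bound_of_continuousOn hS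
  refine ⟨2 * M, ?_⟩
  rintro y ⟨j, hj, u, hu, v, hv, rfl⟩
  have hsub : Icc (P.pt n j) (P.pt n (j + 1)) ⊆ Icc (0 : ℝ) T :=
    Icc_subset_Icc (pt_mem P n j hj.le).1 (pt_mem P n (j + 1) hj).2
  have h1 := hM u (hsub hu)
  have h2 := hM v (hsub hv)
  simp only [Real.norm_eq_abs] at h1 h2
  calc |S u - S v| ≤ |S u| + |S v| := abs_sub _ _
    _ ≤ M + M := add_le_add h1 h2
    _ = 2 * M := by ring

lemma le_oscP {T : ℝ} (S : ℝ → ℝ) (P : PartitionSeq T) (n : ℕ)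
    (hS : ContinuousOn S (Icc 0 T)) {j : ℕ} (hj : j < P.N n)
    {u v : ℝ} (hu : u ∈ Icc (P.pt n j) (P.pt n (j + 1)))
    (hv : v ∈ Icc (P.pt n j) (P.pt n (j + 1))) :
    |S u - S v| ≤ oscP S P n :=
  le_csSup (oscP_bddAbove S P n hS) ⟨j, hj, u, hu, v, hv, rfl⟩

lemma oscP_nonneg {T : ℝ} (S : ℝ → ℝ) (P : PartitionSeq T) (n : ℕ)
    (hS : ContinuousOn S (Icc 0 T)) : 0 ≤ oscP S P n := by
  have h0 : P.pt n 0 ∈ Icc (P.pt n 0) (P.pt n 1) :=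
    ⟨le_rfl, (P.pt_mono n 0 (P.pos n)).le⟩
  have := le_oscP S P n hS (P.pos n) h0 h0
  simpa using this

lemma L_const {T : ℝ} (P : PartitionSeq T) (p : ℕ)
    (S : ℝ → ℝ) (hS : ContinuousOn S (Icc 0 T))
    (L : ℝ → ℝ → ℝ) (hL : HasCLT P p S L) (a c d : ℝ)
    (hc : 0 ≤ c) (hcd : c ≤ d) (hdT : d ≤ T)
    (hside : (∀ x ∈ Icc c d, S x < a) ∨ (∀ x ∈ Icc c d, a < S x)) :
    L d a = L c a := by
  have hc' : c ∈ Icc (0 : ℝ) T := ⟨hc, hcd.trans hdT⟩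
  have hd' : d ∈ Icc (0 : ℝ) T := ⟨hc.trans hcd, hdT⟩
  have Tc : Tendsto (fun n => discLT S P p n c a) atTop (nhds (L c a)) :=
    (hL.2.1 c hc').tendsto_at a
  have Td : Tendsto (fun n => discLT S P p n d a) atTop (nhds (L d a)) :=
    (hL.2.1 d hd').tendsto_at a
  obtain ⟨ε, hε, hεS⟩ : ∃ ε > 0, ∀ x ∈ Icc c d, ε ≤ |S x - a| := by
    have hcomp : IsCompact (Icc c d) := isCompact_Icc
    have hne : (Icc c d).Nonempty := ⟨c, le_rfl, hcd⟩
    have hcont : ContinuousOn (fun x => |S x - a|) (Icc c d) :=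
      ((hS.mono (Icc_subset_Icc hc hdT)).sub continuousOn_const).abs
    obtain ⟨x₀, hx₀, hmin⟩ := hcomp.exists_isMinOn hne hcont
    have hne' : S x₀ ≠ a := by
      rcases hside with h | h
      · exact (h x₀ hx₀).ne
      · exact (h x₀ hx₀).ne'
    exact ⟨|S x₀ - a|, abs_pos.mpr (sub_ne_zero.mpr hne'), fun x hx => hmin hx⟩
  have hev : ∀ᶠ n in atTop, oscP S P n < ε := hL.1.eventually_lt_const hε
  have heq : (fun n => discLT S P p n d a) =ᶠ[atTop] fun n => discLT S P p n c a := by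
    filter_upwards [hev] with n hn
    unfold discLT
    apply Finset.sum_congr rfl
    intro j hj
    have hjN : j < P.N n := Finset.mem_range.mp hj
    by_cases h1 : P.pt n j ≤ c
    · rw [if_pos h1, if_pos (h1.trans hcd)]
    · rw [if_neg h1]
      push_neg at h1
      by_cases h2 : P.pt n j ≤ d
      · rw [if_pos h2]
        apply Set.indicator_of_notMem
        intro hmem
        rw [Set.mem_uIoc] at hmem
        have htj : P.pt n j ∈ Icc c d := ⟨h1.le, h2⟩
        have hstep : |S (P.pt n (j + 1)) - S (P.pt n j)| ≤ oscP S P n :=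
          le_oscP S P n hS hjN ⟨(P.pt_mono n j hjN).le, le_rfl⟩
            ⟨le_rfl, (P.pt_mono n j hjN).le⟩
        have hstep' := abs_lt.mp (hstep.trans_lt hn)
        have hdist := hεS _ htj
        rcases hside with h | h
        · have hja : S (P.pt n j) < a := h _ htj
          have hεle : ε ≤ a - S (P.pt n j) := by
            rwa [abs_sub_comm, abs_of_pos (sub_pos.mpr hja)] at hdist
          rcases hmem with ⟨h3, h4⟩ | ⟨h3, h4⟩
          · linarith [hstep'.2]
          · linarith
        · have hja : a < S (P.pt n j) := h _ htj
          have hεle : ε ≤ S (P.pt n j) - a := by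
            rwa [abs_of_pos (sub_pos.mpr hja)] at hdist
          rcases hmem with ⟨h3, h4⟩ | ⟨h3, h4⟩
          · linarith
          · linarith [hstep'.1]
      · rw [if_neg h2]
  exact tendsto_nhds_unique Td (Filter.Tendsto.congr' heq.symm Tc)

lemma L_zero {T : ℝ} (hT : 0 < T) (P : PartitionSeq T) (p : ℕ) (hp2 : 2 ≤ p)
    (S : ℝ → ℝ) (hS : ContinuousOn S (Icc 0 T))
    (L : ℝ → ℝ → ℝ) (hL : HasCLT P p S L) (a : ℝ) : L 0 a = 0 := by
  have T0 : Tendsto (fun n => discLT S P p n 0 a) atTop (nhds (L 0 a)) :=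
    (hL.2.1 0 ⟨le_rfl, hT.le⟩).tendsto_at a
  have hb : ∀ n, discLT S P p n 0 a =
      Set.indicator (Set.uIoc (S (P.pt n 0)) (S (P.pt n 1)))
        (fun _ => |S (P.pt n 1) - a| ^ (p - 1)) a := by
    intro n
    unfold discLT
    rw [Finset.sum_eq_single 0]
    · rw [if_pos (by rw [P.pt_zero])]
    · intro j hj hj0
      rw [if_neg]
      have h1 : P.pt n 0 < P.pt n j :=
        (P.pt_mono n 0 (P.pos n)).trans_le
          (ptMono P n (Nat.one_le_iff_ne_zero.mpr hj0) (Finset.mem_range.mp hj).le)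
      rw [P.pt_zero] at h1
      exact not_le.mpr h1
    · intro h
      exact absurd (Finset.mem_range.mpr (P.pos n)) h
  have hsq : Tendsto (fun n => discLT S P p n 0 a) atTop (nhds 0) := by
    have hg : Tendsto (fun n => oscP S P n ^ (p - 1)) atTop (nhds 0) := by
      have := hL.1.pow (p - 1)
      rwa [zero_pow (by omega)] at this
    refine squeeze_zero (fun n => ?_) (fun n => ?_) hg
    · rw [hb n]
      exact Set.indicator_nonneg (fun x _ => by positivity) a
    · rw [hb n]
      by_cases hmem : a ∈ Set.uIoc (S (P.pt n 0)) (S (P.pt n 1))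
      · rw [Set.indicator_of_mem hmem]
        have hle : |S (P.pt n 1) - a| ≤ |S (P.pt n 1) - S (P.pt n 0)| := by
          rw [Set.mem_uIoc] at hmem
          rcases hmem with ⟨h1, h2⟩ | ⟨h1, h2⟩
          · rw [abs_of_nonneg (by linarith), abs_of_nonneg (by linarith)]; linarith
          · rw [abs_of_nonpos (by linarith), abs_of_nonpos (by linarith)]; linarith
        calc |S (P.pt n 1) - a| ^ (p - 1)
            ≤ |S (P.pt n 1) - S (P.pt n 0)| ^ (p - 1) :=
              pow_le_pow_left₀ (abs_nonneg _) hle _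
          _ ≤ oscP S P n ^ (p - 1) :=
              pow_le_pow_left₀ (abs_nonneg _)
                (le_oscP S P n hS (P.pos n)
                  ⟨(P.pt_mono n 0 (P.pos n)).le, le_rfl⟩
                  ⟨le_rfl, (P.pt_mono n 0 (P.pos n)).le⟩) _
      · rw [Set.indicator_of_notMem hmem]
        exact pow_nonneg (oscP_nonneg S P n hS) _
  exact tendsto_nhds_unique T0 hsq

lemma null_side {T : ℝ} (P : PartitionSeq T) (p : ℕ)
    (S : ℝ → ℝ) (hS : ContinuousOn S (Icc 0 T))
    (L : ℝ → ℝ → ℝ) (hL : HasCLT P p S L) (a t : ℝ) (ht : t ∈ Icc (0 : ℝ) T)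
    (σ : StieltjesFunction ℝ) (hσ : ∀ s, σ s = L s a)
    (O : Set ℝ) (hO : IsOpen O)
    (hC : ∀ c d : ℝ, 0 ≤ c → c ≤ d → d ≤ T → (∀ x ∈ Icc c d, S x ∈ O) → L d a = L c a) :
    σ.measure {u | u ∈ Ioc (0 : ℝ) t ∧ S u ∈ O} = 0 := by
  set 𝒮 : Set (Set ℝ) :=
    {s | ∃ c d : ℝ, s = Ioo c d ∧ 0 ≤ c ∧ c ≤ d ∧ d ≤ T ∧ ∀ x ∈ Icc c d, S x ∈ O} with h𝒮
  have hopen : ∀ s ∈ 𝒮, IsOpen s := by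
    rintro s ⟨c, d, rfl, -⟩
    exact isOpen_Ioo
  obtain ⟨𝒯, h𝒯c, h𝒯s, h𝒯u⟩ := TopologicalSpace.isOpen_sUnion_countable 𝒮 hopen
  have hnullV : σ.measure (⋃₀ 𝒮) = 0 := by
    rw [← h𝒯u, measure_sUnion_null_iff h𝒯c]
    intro s hs
    obtain ⟨c, d, rfl, hc, hcd, hdT, hin⟩ := h𝒯s hs
    have h0 : σ.measure (Ioc c d) = 0 := by
      rw [σ.measure_Ioc, hσ, hσ, hC c d hc hcd hdT hin, sub_self, ENNReal.ofReal_zero]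
    exact measure_mono_null Ioo_subset_Ioc_self h0
  have hσcont : Continuous σ :=
    Continuous.congr (hL.2.2.comp (continuous_id.prodMk continuous_const))
      (fun s => (hσ s).symm)
  have hnullT : σ.measure {T} = 0 := by
    rw [σ.measure_singleton,
      leftLim_eq_of_tendsto (f := (σ : ℝ → ℝ)) (a := T)
        (h := nhdsLT_neBot T)
        ((hσcont.tendsto T).mono_left nhdsWithin_le_nhds),
      sub_self, ENNReal.ofReal_zero]
  refine measure_mono_null ?_ (measure_union_null hnullV hnullT)
  rintro u ⟨⟨hu0, hut⟩, huS⟩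
  rcases eq_or_lt_of_le (hut.trans ht.2) with hrfl | huT
  · exact Or.inr hrfl
  · left
    have huIcc : u ∈ Icc (0 : ℝ) T := ⟨hu0.le, hut.trans ht.2⟩
    have hc : S ⁻¹' O ∈ nhdsWithin u (Icc (0 : ℝ) T) := (hS u huIcc) (hO.mem_nhds huS)
    rw [mem_nhdsWithin] at hc
    obtain ⟨V, hVopen, hVu, hVsub⟩ := hc
    obtain ⟨δ, hδ, hball⟩ := Metric.isOpen_iff.mp hVopen u hVu
    have hcu : max (u - δ / 2) 0 < u := max_lt (by linarith) hu0
    have hud : u < min (u + δ / 2) T := lt_min (by linarith) huT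
    refine mem_sUnion.mpr ⟨Ioo (max (u - δ / 2) 0) (min (u + δ / 2) T),
      ⟨_, _, rfl, le_max_right _ _, (hcu.trans hud).le, min_le_right _ _, ?_⟩, hcu, hud⟩
    intro x hx
    have hxIcc : x ∈ Icc (0 : ℝ) T :=
      ⟨(le_max_right _ _).trans hx.1, hx.2.trans (min_le_right _ _)⟩
    have hxb : x ∈ Metric.ball u δ := by
      rw [Metric.mem_ball, Real.dist_eq, abs_sub_lt_iff]
      have h1 : u - δ / 2 ≤ x := (le_max_left _ _).trans hx.1
      have h2 : x ≤ u + δ / 2 := hx.2.trans (min_le_left _ _)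
      constructor <;> linarith
    exact hVsub ⟨hball hxb, hxIcc⟩


/-- Proposition 1: the continuous local time of order `p` at level `a` grows only when
`S` is at level `a`: the Lebesgue–Stieltjes integrals (in time, against the nondecreasing
function `t ↦ L_t(a)`, realized by a Stieltjes function `σ`) of `1_{S<a}` and `1_{S>a}`
vanish, and `∫_0^t 1_{S=a} dL(a) = L_t(a)`. -/
theorem local_time_grows_only_on_level {T : ℝ} (hT : 0 < T) (P : PartitionSeq T)
    (p : ℕ) (hp : Even p) (hp2 : 2 ≤ p)
    (S : ℝ → ℝ) (hS : ContinuousOn S (Icc 0 T))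
    (hmesh : Tendsto (meshP P) atTop (nhds 0))
    (L : ℝ → ℝ → ℝ) (hL : HasCLT P p S L) :
    ∀ a : ℝ, ∀ t ∈ Icc (0 : ℝ) T, ∀ σ : StieltjesFunction ℝ, (∀ s, σ s = L s a) →
      (∫ u in Ioc (0 : ℝ) t, (if S u < a then (1 : ℝ) else 0) ∂σ.measure) = 0 ∧
      (∫ u in Ioc (0 : ℝ) t, (if a < S u then (1 : ℝ) else 0) ∂σ.measure) = 0 ∧
      (∫ u in Ioc (0 : ℝ) t, (if S u = a then (1 : ℝ) else 0) ∂σ.measure) = L t a := by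
  intro a t ht σ hσ
  have hA1 : σ.measure {u | u ∈ Ioc (0 : ℝ) t ∧ S u ∈ Iio a} = 0 := by
    refine null_side P p S hS L hL a t ht σ hσ (Iio a) isOpen_Iio ?_
    intro c d hc hcd hdT hin
    exact L_const P p S hS L hL a c d hc hcd hdT (Or.inl hin)
  have hA2 : σ.measure {u | u ∈ Ioc (0 : ℝ) t ∧ S u ∈ Ioi a} = 0 := by
    refine null_side P p S hS L hL a t ht σ hσ (Ioi a) isOpen_Ioi ?_
    intro c d hc hcd hdT hin
    exact L_const P p S hS L hL a c d hc hcd hdT (Or.inr hin)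
  have hae1 : (fun u => if S u < a then (1 : ℝ) else 0)
      =ᵐ[σ.measure.restrict (Ioc (0 : ℝ) t)] 0 := by
    rw [Filter.EventuallyEq, ae_iff]
    rw [Measure.restrict_apply' measurableSet_Ioc]
    refine measure_mono_null ?_ hA1
    rintro x ⟨hx, hxt⟩
    simp only [Set.mem_setOf_eq, Pi.zero_apply] at hx
    refine ⟨hxt, ?_⟩
    rw [Set.mem_Iio]
    by_contra h
    rw [if_neg h] at hx
    exact hx rfl
  have hae2 : (fun u => if a < S u then (1 : ℝ) else 0)
      =ᵐ[σ.measure.restrict (Ioc (0 : ℝ) t)] 0 := by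
    rw [Filter.EventuallyEq, ae_iff]
    rw [Measure.restrict_apply' measurableSet_Ioc]
    refine measure_mono_null ?_ hA2
    rintro x ⟨hx, hxt⟩
    simp only [Set.mem_setOf_eq, Pi.zero_apply] at hx
    refine ⟨hxt, ?_⟩
    rw [Set.mem_Ioi]
    by_contra h
    rw [if_neg h] at hx
    exact hx rfl
  have I1 : (∫ u in Ioc (0 : ℝ) t, (if S u < a then (1 : ℝ) else 0) ∂σ.measure) = 0 :=
    integral_eq_zero_of_ae hae1
  have I2 : (∫ u in Ioc (0 : ℝ) t, (if a < S u then (1 : ℝ) else 0) ∂σ.measure) = 0 :=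
    integral_eq_zero_of_ae hae2
  refine ⟨I1, I2, ?_⟩
  have hint1 : Integrable (fun u => if S u < a then (1 : ℝ) else 0)
      (σ.measure.restrict (Ioc (0 : ℝ) t)) := (integrable_zero _ _ _).congr hae1.symm
  have hint2 : Integrable (fun u => if a < S u then (1 : ℝ) else 0)
      (σ.measure.restrict (Ioc (0 : ℝ) t)) := (integrable_zero _ _ _).congr hae2.symm
  haveI : IsFiniteMeasure (σ.measure.restrict (Ioc (0 : ℝ) t)) := by
    constructor
    rw [Measure.restrict_apply_univ, σ.measure_Ioc]
    exact ENNReal.ofReal_lt_top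
  have hconst : Integrable (fun _ : ℝ => (1 : ℝ)) (σ.measure.restrict (Ioc (0 : ℝ) t)) :=
    integrable_const 1
  have hfun : (fun u => if S u = a then (1 : ℝ) else 0) =
      fun u => (1 : ℝ) - ((if S u < a then (1 : ℝ) else 0) + (if a < S u then (1 : ℝ) else 0)) := by
    funext u
    rcases lt_trichotomy (S u) a with h | h | h
    · rw [if_neg (ne_of_lt h), if_pos h, if_neg (not_lt.mpr h.le)]; ring
    · rw [if_pos h, if_neg (by simp [h]), if_neg (by simp [h])]; ring
    · rw [if_neg (ne_of_gt h), if_neg (not_lt.mpr h.le), if_pos h]; ring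
  have hintg : Integrable
      (fun u => (if S u < a then (1 : ℝ) else 0) + (if a < S u then (1 : ℝ) else 0))
      (σ.measure.restrict (Ioc (0 : ℝ) t)) := hint1.add hint2
  have Ig : (∫ u in Ioc (0 : ℝ) t,
      ((if S u < a then (1 : ℝ) else 0) + (if a < S u then (1 : ℝ) else 0)) ∂σ.measure) = 0 := by
    rw [integral_add hint1 hint2, I1, I2]; ring
  have hnn : (0 : ℝ) ≤ L t a - L 0 a := by
    rw [← hσ t, ← hσ 0]; exact sub_nonneg.mpr (σ.mono ht.1)
  calc (∫ u in Ioc (0 : ℝ) t, (if S u = a then (1 : ℝ) else 0) ∂σ.measure)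
      = ∫ u in Ioc (0 : ℝ) t,
          ((1 : ℝ) - ((if S u < a then (1 : ℝ) else 0) + (if a < S u then (1 : ℝ) else 0)))
          ∂σ.measure := by rw [hfun]
    _ = (∫ _u in Ioc (0 : ℝ) t, (1 : ℝ) ∂σ.measure) - ∫ u in Ioc (0 : ℝ) t,
          ((if S u < a then (1 : ℝ) else 0) + (if a < S u then (1 : ℝ) else 0)) ∂σ.measure :=
        integral_sub hconst hintg
    _ = L t a := by
        rw [Ig, setIntegral_const, measureReal_def, σ.measure_Ioc, hσ t, hσ 0,
          ENNReal.toReal_ofReal hnn, smul_eq_mul, mul_one, sub_zero,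
          L_zero hT P p hp2 S hS L hL a, sub_zero]
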